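/- Let A be a compact and path connected subset of the Manhattan plane ℝ₁². Then the double hatching L(A), regarded as a metric space with the metric induced from ℝ₁², is hyperconvex. -/

import Mathlib

open Set

/-- The taxicab (ℓ¹) distance on the plane, making `ℝ × ℝ` the Manhattan plane ℝ₁². -/
def taxiDist (p q : ℝ × ℝ) : ℝ := |p.1 - q.1| + |p.2 - q.2|

/-- Horizontal hatching `L_x(A)`. -/
def hatchX (A : Set (ℝ × ℝ)) : Set (ℝ × ℝ) :=
  {p | ∃ a ∈ A, ∃ b ∈ A, a.2 = p.2 ∧ b.2 = p.2 ∧ a.1 ≤ p.1 ∧ p.1 ≤ b.1}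

/-- Vertical hatching `L_y(A)`. -/
def hatchY (A : Set (ℝ × ℝ)) : Set (ℝ × ℝ) :=
  {p | ∃ a ∈ A, ∃ b ∈ A, a.1 = p.1 ∧ b.1 = p.1 ∧ a.2 ≤ p.2 ∧ p.2 ≤ b.2}

/-- Double hatching `L(A) = L_x(L_y(A))`. -/
def doubleHatch (A : Set (ℝ × ℝ)) : Set (ℝ × ℝ) := hatchX (hatchY A)

/-- A subset `S` of the Manhattan plane, regarded as a metric space with the induced
taxicab metric, is hyperconvex: for every family of points of `S` and nonnegative radii
with `d₁(x i, x j) ≤ r i + r j`, the closed balls (in `S`) have a common point. -/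
def TaxiHyperconvexOn (S : Set (ℝ × ℝ)) : Prop :=
  ∀ (I : Type) (x : I → ℝ × ℝ) (r : I → ℝ),
    (∀ i, x i ∈ S) → (∀ i, 0 ≤ r i) →
    (∀ i j, taxiDist (x i) (x j) ≤ r i + r j) →
    ∃ y ∈ S, ∀ i, taxiDist (x i) y ≤ r i

namespace TDH

open Filter Topology

/-! ### One-dimensional helpers -/

lemma mem_uIcc_of {a b x : ℝ} (h1 : min a b ≤ x) (h2 : x ≤ max a b) : x ∈ uIcc a b := by
  rcases le_total a b with h | h
  · rw [min_eq_left h] at h1; rw [max_eq_right h] at h2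
    exact Set.mem_uIcc.2 (Or.inl ⟨h1, h2⟩)
  · rw [min_eq_right h] at h1; rw [max_eq_left h] at h2
    exact Set.mem_uIcc.2 (Or.inr ⟨h1, h2⟩)

lemma uIcc_bounds {a b x : ℝ} (h : x ∈ uIcc a b) : min a b ≤ x ∧ x ≤ max a b := by
  rcases Set.mem_uIcc.1 h with ⟨h1, h2⟩ | ⟨h1, h2⟩
  · exact ⟨(min_le_left a b).trans h1, h2.trans (le_max_right a b)⟩
  · exact ⟨(min_le_right a b).trans h1, h2.trans (le_max_left a b)⟩

lemma abs_between {l r x : ℝ} (h : x ∈ uIcc l r) : |l - x| + |x - r| = |l - r| := by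
  rcases Set.mem_uIcc.1 h with ⟨h1, h2⟩ | ⟨h1, h2⟩
  · rw [abs_of_nonpos (by linarith), abs_of_nonpos (by linarith), abs_of_nonpos (by linarith)]
    ring
  · rw [abs_of_nonneg (by linarith), abs_of_nonneg (by linarith), abs_of_nonneg (by linarith)]
    ring

lemma neg_mem_uIcc {a b x : ℝ} (h : x ∈ uIcc a b) : -x ∈ uIcc (-a) (-b) := by
  rcases Set.mem_uIcc.1 h with ⟨h1, h2⟩ | ⟨h1, h2⟩
  · exact Set.mem_uIcc.2 (Or.inr ⟨by linarith, by linarith⟩)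
  · exact Set.mem_uIcc.2 (Or.inl ⟨by linarith, by linarith⟩)

lemma uIcc_split {a m b x : ℝ} (hx : x ∈ uIcc a b) (hn : x ∉ uIcc a m) : x ∈ uIcc m b := by
  rw [Set.mem_uIcc] at hx ⊢
  rw [Set.mem_uIcc] at hn
  push_neg at hn
  rcases hx with ⟨h1, h2⟩ | ⟨h1, h2⟩ <;> rcases le_total m x with h3 | h3
  · exact Or.inl ⟨h3, h2⟩
  · exact absurd (hn.1 h1) (not_lt.2 h3)
  · exact absurd (hn.2 h3) (not_lt.2 h2)
  · exact Or.inr ⟨h1, h3⟩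

/-- clamp of `c` into the unordered interval `[a, b]` (the coordinatewise median). -/
noncomputable def mid (a b c : ℝ) : ℝ := min (max c (min a b)) (max a b)

lemma min_le_mid (a b c : ℝ) : min a b ≤ mid a b c :=
  le_min (le_max_right _ _) min_le_max

lemma mid_le_max (a b c : ℝ) : mid a b c ≤ max a b := min_le_right _ _

lemma mid_mem_uIcc (a b c : ℝ) : mid a b c ∈ uIcc a b :=
  mem_uIcc_of (min_le_mid a b c) (mid_le_max a b c)

lemma mid_mem_uIcc_left (a b c : ℝ) : mid a b c ∈ uIcc a c := by
  refine mem_uIcc_of (le_min ?_ ?_) ?_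
  · exact (min_le_right a c).trans (le_max_left _ _)
  · exact (min_le_left a c).trans (le_max_left a b)
  · exact (min_le_left _ _).trans
      (max_le (le_max_right a c) ((min_le_left a b).trans (le_max_left a c)))

lemma mid_of_mem {a b c : ℝ} (h1 : min a b ≤ c) (h2 : c ≤ max a b) : mid a b c = c := by
  rw [mid, max_eq_left h1, min_eq_left h2]

lemma mid_of_le {a b c : ℝ} (h : c ≤ min a b) : mid a b c = min a b := by
  rw [mid, max_eq_right h, min_eq_left min_le_max]

lemma mid_of_ge {a b c : ℝ} (h : max a b ≤ c) : mid a b c = max a b := by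
  rw [mid, max_eq_left (min_le_max.trans h), min_eq_right h]

lemma mid_collapse {a b c : ℝ} (h : mid a b c = a) : a ∈ uIcc b c := by
  rcases le_total c (min a b) with h1 | h1
  · rw [mid_of_le h1] at h
    exact Set.mem_uIcc.2 (Or.inr ⟨h ▸ h1, h ▸ min_le_right a b⟩)
  · rcases le_total (max a b) c with h2 | h2
    · rw [mid_of_ge h2] at h
      exact Set.mem_uIcc.2 (Or.inl ⟨h ▸ le_max_right a b, h ▸ h2⟩)
    · rw [mid_of_mem h1 h2] at h
      subst h
      exact Set.right_mem_uIcc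

/-! ### taxicab basics -/

lemma taxi_comm (p q : ℝ × ℝ) : taxiDist p q = taxiDist q p := by
  unfold taxiDist; rw [abs_sub_comm, abs_sub_comm p.2]

lemma taxi_triangle (p q s : ℝ × ℝ) : taxiDist p s ≤ taxiDist p q + taxiDist q s := by
  unfold taxiDist
  have h1 := abs_sub_le p.1 q.1 s.1
  have h2 := abs_sub_le p.2 q.2 s.2
  linarith

lemma taxi_self (p : ℝ × ℝ) : taxiDist p p = 0 := by simp [taxiDist]

lemma taxi_pos {p q : ℝ × ℝ} (h : p ≠ q) : 0 < taxiDist p q := by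
  by_contra h'
  push_neg at h'
  have hn1 := abs_nonneg (p.1 - q.1)
  have hn2 := abs_nonneg (p.2 - q.2)
  unfold taxiDist at h'
  apply h
  have e1 : p.1 = q.1 := by
    have h0 : |p.1 - q.1| = 0 := le_antisymm (by linarith) hn1
    have := abs_eq_zero.1 h0; linarith
  have e2 : p.2 = q.2 := by
    have h0 : |p.2 - q.2| = 0 := le_antisymm (by linarith) hn2
    have := abs_eq_zero.1 h0; linarith
  exact Prod.ext e1 e2

lemma taxi_le_two_dist (p q : ℝ × ℝ) : taxiDist p q ≤ 2 * dist p q := by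
  rw [Prod.dist_eq, Real.dist_eq, Real.dist_eq]
  unfold taxiDist
  have h1 : |p.1 - q.1| ≤ |p.1 - q.1| ⊔ |p.2 - q.2| := le_max_left _ _
  have h2 : |p.2 - q.2| ≤ |p.1 - q.1| ⊔ |p.2 - q.2| := le_max_right _ _
  linarith

lemma taxi_cont (q : ℝ × ℝ) : Continuous fun p : ℝ × ℝ => taxiDist q p := by
  unfold taxiDist
  fun_prop

/-! ### betweenness -/

def Btw (a b c : ℝ × ℝ) : Prop := b.1 ∈ uIcc a.1 c.1 ∧ b.2 ∈ uIcc a.2 c.2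

lemma Btw.dist_eq {a b c : ℝ × ℝ} (h : Btw a b c) :
    taxiDist a b + taxiDist b c = taxiDist a c := by
  have h1 := abs_between h.1
  have h2 := abs_between h.2
  unfold taxiDist
  linarith

lemma Btw.trans {y p z w : ℝ × ℝ} (h1 : Btw y p z) (h2 : Btw y z w) : Btw y p w :=
  ⟨Set.uIcc_subset_uIcc Set.left_mem_uIcc h2.1 h1.1,
   Set.uIcc_subset_uIcc Set.left_mem_uIcc h2.2 h1.2⟩

/-! ### transformations -/

def nX (p : ℝ × ℝ) : ℝ × ℝ := (-p.1, p.2)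
def nY (p : ℝ × ℝ) : ℝ × ℝ := (p.1, -p.2)
def sW (p : ℝ × ℝ) : ℝ × ℝ := (p.2, p.1)

@[simp] lemma nX_nX (p : ℝ × ℝ) : nX (nX p) = p := by simp [nX]
@[simp] lemma nY_nY (p : ℝ × ℝ) : nY (nY p) = p := by simp [nY]
@[simp] lemma sW_sW (p : ℝ × ℝ) : sW (sW p) = p := rfl

lemma cont_nX : Continuous nX := by unfold nX; fun_prop
lemma cont_nY : Continuous nY := by unfold nY; fun_prop
lemma cont_sW : Continuous sW := by unfold sW; fun_prop

lemma mem_nX {T : Set (ℝ × ℝ)} {p : ℝ × ℝ} : p ∈ nX '' T ↔ nX p ∈ T := by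
  constructor
  · rintro ⟨q, hq, rfl⟩; simpa using hq
  · intro h; exact ⟨nX p, h, nX_nX p⟩

lemma mem_nY {T : Set (ℝ × ℝ)} {p : ℝ × ℝ} : p ∈ nY '' T ↔ nY p ∈ T := by
  constructor
  · rintro ⟨q, hq, rfl⟩; simpa using hq
  · intro h; exact ⟨nY p, h, nY_nY p⟩

lemma mem_sW {T : Set (ℝ × ℝ)} {p : ℝ × ℝ} : p ∈ sW '' T ↔ sW p ∈ T := by
  constructor
  · rintro ⟨q, hq, rfl⟩; simpa using hq
  · intro h; exact ⟨sW p, h, sW_sW p⟩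

/-! ### orthogonal convexity -/

def HC (T : Set (ℝ × ℝ)) : Prop :=
  ∀ a ∈ T, ∀ b ∈ T, a.2 = b.2 → ∀ x ∈ uIcc a.1 b.1, ((x : ℝ), a.2) ∈ T

def VC (T : Set (ℝ × ℝ)) : Prop :=
  ∀ a ∈ T, ∀ b ∈ T, a.1 = b.1 → ∀ y ∈ uIcc a.2 b.2, (a.1, (y : ℝ)) ∈ T

def Nice (T : Set (ℝ × ℝ)) : Prop := IsPathConnected T ∧ HC T ∧ VC T

lemma HC_nX {T : Set (ℝ × ℝ)} (h : HC T) : HC (nX '' T) := by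
  intro a ha b hb hab x hx
  rw [mem_nX] at ha hb ⊢
  have key := h (nX a) ha (nX b) hb (by simpa [nX] using hab) (-x) (neg_mem_uIcc hx)
  simpa [nX] using key

lemma VC_nX {T : Set (ℝ × ℝ)} (h : VC T) : VC (nX '' T) := by
  intro a ha b hb hab y hy
  rw [mem_nX] at ha hb ⊢
  have key := h (nX a) ha (nX b) hb (by simp [nX, hab]) y (by simpa [nX] using hy)
  simpa [nX] using key

lemma HC_nY {T : Set (ℝ × ℝ)} (h : HC T) : HC (nY '' T) := by
  intro a ha b hb hab x hx
  rw [mem_nY] at ha hb ⊢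
  have key := h (nY a) ha (nY b) hb (by simp [nY, hab]) x (by simpa [nY] using hx)
  simpa [nY] using key

lemma VC_nY {T : Set (ℝ × ℝ)} (h : VC T) : VC (nY '' T) := by
  intro a ha b hb hab y hy
  rw [mem_nY] at ha hb ⊢
  have key := h (nY a) ha (nY b) hb (by simpa [nY] using hab) (-y)
    (neg_mem_uIcc (by simpa [nY] using hy))
  simpa [nY] using key

lemma HC_sW {T : Set (ℝ × ℝ)} (h : VC T) : HC (sW '' T) := by
  intro a ha b hb hab x hx
  rw [mem_sW] at ha hb ⊢
  have key := h (sW a) ha (sW b) hb (by simpa [sW] using hab) x (by simpa [sW] using hx)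
  simpa [sW] using key

lemma VC_sW {T : Set (ℝ × ℝ)} (h : HC T) : VC (sW '' T) := by
  intro a ha b hb hab y hy
  rw [mem_sW] at ha hb ⊢
  have key := h (sW a) ha (sW b) hb (by simpa [sW] using hab) y (by simpa [sW] using hy)
  simpa [sW] using key

lemma Nice_nX {T : Set (ℝ × ℝ)} (h : Nice T) : Nice (nX '' T) :=
  ⟨h.1.image cont_nX, HC_nX h.2.1, VC_nX h.2.2⟩

lemma Nice_nY {T : Set (ℝ × ℝ)} (h : Nice T) : Nice (nY '' T) :=
  ⟨h.1.image cont_nY, HC_nY h.2.1, VC_nY h.2.2⟩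

lemma Nice_sW {T : Set (ℝ × ℝ)} (h : Nice T) : Nice (sW '' T) :=
  ⟨h.1.image cont_sW, HC_sW h.2.2, VC_sW h.2.1⟩

end TDH

section TDHmain
open TDH Set Filter Topology

/-! ### The edge and corner lemmas -/

lemma tp_edge {T : Set (ℝ × ℝ)} (hHC : HC T) (hVC : VC T) {o c p : ℝ × ℝ}
    (hj : JoinedIn T o c) (hpT : p ∈ T) (hoc : o.1 ≤ c.1) (hcp : c.1 ≤ p.1)
    (hy : p.2 ∈ uIcc o.2 c.2) : ((c.1 : ℝ), p.2) ∈ T := by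
  obtain ⟨γ, hγ⟩ := hj
  set f : ℝ → ℝ × ℝ := ⇑γ.extend with hfdef
  have hf : Continuous f := γ.continuous_extend
  have hmem : ∀ s ∈ Icc (0:ℝ) 1, f s ∈ T := by
    intro s hs; rw [hfdef, γ.extend_apply hs]; exact hγ _
  have hf0 : f 0 = o := γ.extend_zero
  have hf1 : f 1 = c := γ.extend_one
  have hcT : c ∈ T := hf1 ▸ hmem 1 ⟨zero_le_one, le_rfl⟩
  set E := Icc (0:ℝ) 1 ∩ {s | (f s).1 = c.1} with hE
  have hEc : IsClosed E :=
    isClosed_Icc.inter (isClosed_eq (continuous_fst.comp hf) continuous_const)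
  have hEne : E.Nonempty := ⟨1, ⟨by norm_num, by simp [hf1]⟩⟩
  have hEbdd : BddBelow E := ⟨0, fun s hs => hs.1.1⟩
  set t₀ := sInf E with ht₀def
  have ht₀E : t₀ ∈ E := hEc.csInf_mem hEne hEbdd
  have ht₀I : t₀ ∈ Icc (0:ℝ) 1 := ht₀E.1
  have hfx : (f t₀).1 = c.1 := ht₀E.2
  have hbefore : ∀ s ∈ Icc (0:ℝ) t₀, (f s).1 ≤ c.1 := by
    intro s hs
    by_contra hgt
    push_neg at hgt
    have hsI : s ∈ Icc (0:ℝ) 1 := ⟨hs.1, hs.2.trans ht₀I.2⟩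
    have hIVT := intermediate_value_Icc hs.1
      ((continuous_fst.comp hf).continuousOn (s := Icc 0 s))
    have hc_mem : c.1 ∈ Icc ((f 0).1) ((f s).1) := by
      rw [hf0]; exact ⟨hoc, le_of_lt hgt⟩
    obtain ⟨s', hs', hfs'⟩ := hIVT hc_mem
    simp only [Function.comp_apply] at hfs'
    have hs'E : s' ∈ E := ⟨⟨hs'.1, hs'.2.trans hsI.2⟩, hfs'⟩
    have h1 : t₀ ≤ s' := csInf_le hEbdd hs'E
    have h2 : s' = s := le_antisymm hs'.2 (hs.2.trans h1)
    rw [h2] at hfs'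
    exact (ne_of_gt hgt) hfs'
  by_cases hcase : p.2 ∈ uIcc ((f 0).2) ((f t₀).2)
  · have hIVT := intermediate_value_uIcc (a := (0:ℝ)) (b := t₀)
      ((continuous_snd.comp hf).continuousOn)
    obtain ⟨s, hs, hfs⟩ := hIVT hcase
    simp only [Function.comp_apply] at hfs
    rw [Set.uIcc_of_le ht₀I.1] at hs
    have hsT : f s ∈ T := hmem s ⟨hs.1, hs.2.trans ht₀I.2⟩
    have hkey := hHC (f s) hsT p hpT (by rw [hfs]) c.1
      (Set.mem_uIcc.2 (Or.inl ⟨hbefore s hs, hcp⟩))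
    rw [hfs] at hkey
    exact hkey
  · have hy' : p.2 ∈ uIcc ((f 0).2) c.2 := by rw [hf0]; exact hy
    have hsplit : p.2 ∈ uIcc ((f t₀).2) c.2 := uIcc_split hy' hcase
    have hkey := hVC (f t₀) (hmem t₀ ht₀I) c hcT hfx p.2 hsplit
    rw [hfx] at hkey
    exact hkey

lemma tp_corner {T : Set (ℝ × ℝ)} (hHC : HC T) (hVC : VC T) {w c p : ℝ × ℝ}
    (hj : JoinedIn T c p) (hw : w ∈ T) (hwc : w.1 ≤ c.1) (hcw : c.2 ≤ w.2)
    (hcp : c.1 ≤ p.1) (hwp : w.2 ≤ p.2) : ((c.1 : ℝ), w.2) ∈ T := by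
  obtain ⟨γ, hγ⟩ := hj
  set f : ℝ → ℝ × ℝ := ⇑γ.extend with hfdef
  have hf : Continuous f := γ.continuous_extend
  have hmem : ∀ s ∈ Icc (0:ℝ) 1, f s ∈ T := by
    intro s hs; rw [hfdef, γ.extend_apply hs]; exact hγ _
  have hf0 : f 0 = c := γ.extend_zero
  have hf1 : f 1 = p := γ.extend_one
  have hcT : c ∈ T := hf0 ▸ hmem 0 ⟨le_rfl, zero_le_one⟩
  set E := Icc (0:ℝ) 1 ∩ {s | (f s).1 ≤ c.1} with hE
  have hEc : IsClosed E :=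
    isClosed_Icc.inter (isClosed_le (continuous_fst.comp hf) continuous_const)
  have hEne : E.Nonempty := ⟨0, ⟨by norm_num, by simp [hf0]⟩⟩
  have hEbdd : BddAbove E := ⟨1, fun s hs => hs.1.2⟩
  set t₀ := sSup E with ht₀def
  have ht₀E : t₀ ∈ E := hEc.csSup_mem hEne hEbdd
  have ht₀I : t₀ ∈ Icc (0:ℝ) 1 := ht₀E.1
  have hfx : (f t₀).1 = c.1 := by
    have hle : (f t₀).1 ≤ c.1 := ht₀E.2
    rcases eq_or_lt_of_le hle with h | h
    · exact h
    · exfalso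
      have ht₀1 : t₀ < 1 := by
        rcases eq_or_lt_of_le ht₀I.2 with h1 | h1
        · exfalso; rw [h1, hf1] at h; linarith
        · exact h1
      have hopen : {s : ℝ | (f s).1 < c.1} ∈ 𝓝 t₀ :=
        (isOpen_lt (continuous_fst.comp hf) continuous_const).mem_nhds h
      have hlt1 : Iio (1:ℝ) ∈ 𝓝 t₀ := Iio_mem_nhds ht₀1
      have hev : ∀ᶠ s in 𝓝[>] t₀, (f s).1 < c.1 ∧ s < 1 ∧ t₀ < s := by
        filter_upwards [nhdsWithin_le_nhds hopen, nhdsWithin_le_nhds hlt1,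
          self_mem_nhdsWithin] with s h1 h2 h3
        exact ⟨h1, h2, h3⟩
      obtain ⟨s, hs1, hs2, hs3⟩ := hev.exists
      have hsE : s ∈ E := ⟨⟨ht₀I.1.trans (le_of_lt hs3), le_of_lt hs2⟩, le_of_lt hs1⟩
      exact absurd (le_csSup hEbdd hsE) (not_le.2 hs3)
  by_cases hcase : w.2 ≤ (f t₀).2
  · exact hVC c hcT (f t₀) (hmem t₀ ht₀I) hfx.symm w.2
      (Set.mem_uIcc.2 (Or.inl ⟨hcw, hcase⟩))
  · push_neg at hcase
    have hIVT := intermediate_value_Icc ht₀I.2 ((continuous_snd.comp hf).continuousOn)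
    have hwmem : w.2 ∈ Icc ((f t₀).2) ((f 1).2) := ⟨le_of_lt hcase, by rw [hf1]; exact hwp⟩
    obtain ⟨s, hs, hfs⟩ := hIVT hwmem
    simp only [Function.comp_apply] at hfs
    have hsI : s ∈ Icc (0:ℝ) 1 := ⟨ht₀I.1.trans hs.1, hs.2⟩
    have hxge : c.1 ≤ (f s).1 := by
      by_contra hlt
      push_neg at hlt
      have hsE : s ∈ E := ⟨hsI, le_of_lt hlt⟩
      have heq : s = t₀ := le_antisymm (le_csSup hEbdd hsE) hs.1
      rw [heq, hfx] at hlt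
      exact lt_irrefl _ hlt
    exact hHC w hw (f s) (hmem s hsI) (by rw [hfs]) c.1
      (Set.mem_uIcc.2 (Or.inl ⟨hwc, hxge⟩))

/-! ### oriented edge and corner lemmas -/

lemma tp_edge_hi {T : Set (ℝ × ℝ)} (hN : Nice T) {y z p : ℝ × ℝ} (hy : y ∈ T) (hz : z ∈ T)
    (hp : p ∈ T) (h1 : max y.1 z.1 ≤ p.1) (h2 : p.2 ∈ uIcc y.2 z.2) :
    ((max y.1 z.1 : ℝ), p.2) ∈ T := by
  rcases le_total y.1 z.1 with h | h
  · rw [max_eq_right h]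
    exact tp_edge hN.2.1 hN.2.2 (hN.1.joinedIn y hy z hz) hp h
      ((le_max_right y.1 z.1).trans h1) h2
  · rw [max_eq_left h]
    exact tp_edge hN.2.1 hN.2.2 (hN.1.joinedIn z hz y hy) hp h
      ((le_max_left y.1 z.1).trans h1) (by rwa [Set.uIcc_comm] at h2)

lemma tp_edge_lo {T : Set (ℝ × ℝ)} (hN : Nice T) {y z p : ℝ × ℝ} (hy : y ∈ T) (hz : z ∈ T)
    (hp : p ∈ T) (h1 : p.1 ≤ min y.1 z.1) (h2 : p.2 ∈ uIcc y.2 z.2) :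
    ((min y.1 z.1 : ℝ), p.2) ∈ T := by
  have key := tp_edge_hi (Nice_nX hN) (Set.mem_image_of_mem nX hy)
    (Set.mem_image_of_mem nX hz) (Set.mem_image_of_mem nX hp)
    (by show max (-y.1) (-z.1) ≤ -p.1; rw [max_neg_neg]; exact neg_le_neg h1)
    (by simpa [nX] using h2)
  rw [mem_nX] at key
  simpa [nX, max_neg_neg] using key

lemma tp_edge_top {T : Set (ℝ × ℝ)} (hN : Nice T) {y z p : ℝ × ℝ} (hy : y ∈ T) (hz : z ∈ T)
    (hp : p ∈ T) (h1 : p.1 ∈ uIcc y.1 z.1) (h2 : max y.2 z.2 ≤ p.2) :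
    (p.1, (max y.2 z.2 : ℝ)) ∈ T := by
  have key := tp_edge_hi (Nice_sW hN) (Set.mem_image_of_mem sW hy)
    (Set.mem_image_of_mem sW hz) (Set.mem_image_of_mem sW hp)
    (by simpa [sW] using h2) (by simpa [sW] using h1)
  rw [mem_sW] at key
  simpa [sW] using key

lemma tp_edge_bot {T : Set (ℝ × ℝ)} (hN : Nice T) {y z p : ℝ × ℝ} (hy : y ∈ T) (hz : z ∈ T)
    (hp : p ∈ T) (h1 : p.1 ∈ uIcc y.1 z.1) (h2 : p.2 ≤ min y.2 z.2) :
    (p.1, (min y.2 z.2 : ℝ)) ∈ T := by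
  have key := tp_edge_lo (Nice_sW hN) (Set.mem_image_of_mem sW hy)
    (Set.mem_image_of_mem sW hz) (Set.mem_image_of_mem sW hp)
    (by simpa [sW] using h2) (by simpa [sW] using h1)
  rw [mem_sW] at key
  simpa [sW] using key

lemma tp_corner_hihi {T : Set (ℝ × ℝ)} (hN : Nice T) {y z p : ℝ × ℝ} (hy : y ∈ T) (hz : z ∈ T)
    (hp : p ∈ T) (h1 : max y.1 z.1 ≤ p.1) (h2 : max y.2 z.2 ≤ p.2) :
    ((max y.1 z.1 : ℝ), (max y.2 z.2 : ℝ)) ∈ T := by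
  rcases le_total y.1 z.1 with h | h
  · rw [max_eq_right h]
    rcases le_total y.2 z.2 with h' | h'
    · rw [max_eq_right h']; simpa using hz
    · rw [max_eq_left h']
      exact tp_corner hN.2.1 hN.2.2 (hN.1.joinedIn z hz p hp) hy h h'
        ((le_max_right y.1 z.1).trans h1) ((le_max_left y.2 z.2).trans h2)
  · rw [max_eq_left h]
    rcases le_total y.2 z.2 with h' | h'
    · rw [max_eq_right h']
      exact tp_corner hN.2.1 hN.2.2 (hN.1.joinedIn y hy p hp) hz h h'
        ((le_max_left y.1 z.1).trans h1) ((le_max_right y.2 z.2).trans h2)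
    · rw [max_eq_left h']; simpa using hy

lemma tp_corner_lohi {T : Set (ℝ × ℝ)} (hN : Nice T) {y z p : ℝ × ℝ} (hy : y ∈ T) (hz : z ∈ T)
    (hp : p ∈ T) (h1 : p.1 ≤ min y.1 z.1) (h2 : max y.2 z.2 ≤ p.2) :
    ((min y.1 z.1 : ℝ), (max y.2 z.2 : ℝ)) ∈ T := by
  have key := tp_corner_hihi (Nice_nX hN) (Set.mem_image_of_mem nX hy)
    (Set.mem_image_of_mem nX hz) (Set.mem_image_of_mem nX hp)
    (by show max (-y.1) (-z.1) ≤ -p.1; rw [max_neg_neg]; exact neg_le_neg h1)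
    (by simpa [nX] using h2)
  rw [mem_nX] at key
  simpa [nX, max_neg_neg] using key

lemma tp_corner_hilo {T : Set (ℝ × ℝ)} (hN : Nice T) {y z p : ℝ × ℝ} (hy : y ∈ T) (hz : z ∈ T)
    (hp : p ∈ T) (h1 : max y.1 z.1 ≤ p.1) (h2 : p.2 ≤ min y.2 z.2) :
    ((max y.1 z.1 : ℝ), (min y.2 z.2 : ℝ)) ∈ T := by
  have key := tp_corner_lohi (Nice_sW hN) (Set.mem_image_of_mem sW hy)
    (Set.mem_image_of_mem sW hz) (Set.mem_image_of_mem sW hp)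
    (by simpa [sW] using h2) (by simpa [sW] using h1)
  rw [mem_sW] at key
  simpa [sW] using key

lemma tp_corner_lolo {T : Set (ℝ × ℝ)} (hN : Nice T) {y z p : ℝ × ℝ} (hy : y ∈ T) (hz : z ∈ T)
    (hp : p ∈ T) (h1 : p.1 ≤ min y.1 z.1) (h2 : p.2 ≤ min y.2 z.2) :
    ((min y.1 z.1 : ℝ), (min y.2 z.2 : ℝ)) ∈ T := by
  have key := tp_corner_hilo (Nice_nX hN) (Set.mem_image_of_mem nX hy)
    (Set.mem_image_of_mem nX hz) (Set.mem_image_of_mem nX hp)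
    (by show max (-y.1) (-z.1) ≤ -p.1; rw [max_neg_neg]; exact neg_le_neg h1)
    (by simpa [nX] using h2)
  rw [mem_nX] at key
  simpa [nX, max_neg_neg] using key

/-! ### the clamp lemma -/

noncomputable def clampB (y z p : ℝ × ℝ) : ℝ × ℝ := (mid y.1 z.1 p.1, mid y.2 z.2 p.2)

lemma clamp_mem {T : Set (ℝ × ℝ)} (hN : Nice T) {y z p : ℝ × ℝ} (hy : y ∈ T) (hz : z ∈ T)
    (hp : p ∈ T) : clampB y z p ∈ T := by
  unfold clampB
  rcases le_total p.1 (min y.1 z.1) with hx1 | hx1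
  · rw [mid_of_le hx1]
    rcases le_total p.2 (min y.2 z.2) with hy1 | hy1
    · rw [mid_of_le hy1]; exact tp_corner_lolo hN hy hz hp hx1 hy1
    · rcases le_total (max y.2 z.2) p.2 with hy2 | hy2
      · rw [mid_of_ge hy2]; exact tp_corner_lohi hN hy hz hp hx1 hy2
      · rw [mid_of_mem hy1 hy2]; exact tp_edge_lo hN hy hz hp hx1 (mem_uIcc_of hy1 hy2)
  · rcases le_total (max y.1 z.1) p.1 with hx2 | hx2
    · rw [mid_of_ge hx2]
      rcases le_total p.2 (min y.2 z.2) with hy1 | hy1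
      · rw [mid_of_le hy1]; exact tp_corner_hilo hN hy hz hp hx2 hy1
      · rcases le_total (max y.2 z.2) p.2 with hy2 | hy2
        · rw [mid_of_ge hy2]; exact tp_corner_hihi hN hy hz hp hx2 hy2
        · rw [mid_of_mem hy1 hy2]; exact tp_edge_hi hN hy hz hp hx2 (mem_uIcc_of hy1 hy2)
    · rw [mid_of_mem hx1 hx2]
      rcases le_total p.2 (min y.2 z.2) with hy1 | hy1
      · rw [mid_of_le hy1]; exact tp_edge_bot hN hy hz hp (mem_uIcc_of hx1 hx2) hy1
      · rcases le_total (max y.2 z.2) p.2 with hy2 | hy2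
        · rw [mid_of_ge hy2]; exact tp_edge_top hN hy hz hp (mem_uIcc_of hx1 hx2) hy2
        · rw [mid_of_mem hy1 hy2]; simpa using hp

/-! ### hatching basics -/

lemma subset_hatchX (T : Set (ℝ × ℝ)) : T ⊆ hatchX T :=
  fun p hp => ⟨p, hp, p, hp, rfl, rfl, le_rfl, le_rfl⟩

lemma subset_hatchY (T : Set (ℝ × ℝ)) : T ⊆ hatchY T :=
  fun p hp => ⟨p, hp, p, hp, rfl, rfl, le_rfl, le_rfl⟩

lemma hc_hatchX (T : Set (ℝ × ℝ)) : HC (hatchX T) := by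
  rintro a ⟨la, hla, ra, hra, hla2, hra2, hla1, hra1⟩
    b ⟨lb, hlb, rb, hrb, hlb2, hrb2, hlb1, hrb1⟩ hab x hx
  rcases Set.mem_uIcc.1 hx with ⟨h1, h2⟩ | ⟨h1, h2⟩
  · exact ⟨la, hla, rb, hrb, hla2, hrb2.trans hab.symm, hla1.trans h1, h2.trans hrb1⟩
  · exact ⟨lb, hlb, ra, hra, hlb2.trans hab.symm, hra2, hlb1.trans h1, h2.trans hra1⟩

lemma vc_hatchY (T : Set (ℝ × ℝ)) : VC (hatchY T) := by
  rintro a ⟨da, hda, ua, hua, hda1, hua1, hda2, hua2⟩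
    b ⟨db, hdb, ub, hub, hdb1, hub1, hdb2, hub2⟩ hab y hy
  rcases Set.mem_uIcc.1 hy with ⟨h1, h2⟩ | ⟨h1, h2⟩
  · exact ⟨da, hda, ub, hub, hda1, hub1.trans hab.symm, hda2.trans h1, h2.trans hub2⟩
  · exact ⟨db, hdb, ua, hua, hdb1.trans hab.symm, hua1, hdb2.trans h1, h2.trans hua2⟩

lemma hatchX_nY (T : Set (ℝ × ℝ)) : hatchX (nY '' T) = nY '' hatchX T := by
  ext p
  constructor
  · rintro ⟨a, ha, b, hb, ha2, hb2, ha1, hb1⟩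
    rw [mem_nY] at ha hb
    refine mem_nY.2 ⟨nY a, ha, nY b, hb, ?_, ?_, ?_, ?_⟩
    · exact neg_inj.2 ha2
    · exact neg_inj.2 hb2
    · exact ha1
    · exact hb1
  · rintro ⟨q, ⟨a, ha, b, hb, ha2, hb2, ha1, hb1⟩, rfl⟩
    exact ⟨nY a, Set.mem_image_of_mem _ ha, nY b, Set.mem_image_of_mem _ hb,
      neg_inj.2 ha2, neg_inj.2 hb2, ha1, hb1⟩

lemma hatchX_sW (T : Set (ℝ × ℝ)) : hatchX (sW '' T) = sW '' hatchY T := by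
  ext p
  constructor
  · rintro ⟨a, ha, b, hb, ha2, hb2, ha1, hb1⟩
    rw [mem_sW] at ha hb
    exact mem_sW.2 ⟨sW a, ha, sW b, hb, ha2, hb2, ha1, hb1⟩
  · rintro ⟨q, ⟨a, ha, b, hb, h1, h2, h3, h4⟩, rfl⟩
    exact ⟨sW a, Set.mem_image_of_mem _ ha, sW b, Set.mem_image_of_mem _ hb, h1, h2, h3, h4⟩

lemma hatchY_sW (T : Set (ℝ × ℝ)) : hatchY (sW '' T) = sW '' hatchX T := by
  ext p
  constructor
  · rintro ⟨a, ha, b, hb, ha1, hb1, ha2, hb2⟩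
    rw [mem_sW] at ha hb
    exact mem_sW.2 ⟨sW a, ha, sW b, hb, ha1, hb1, ha2, hb2⟩
  · rintro ⟨q, ⟨a, ha, b, hb, h1, h2, h3, h4⟩, rfl⟩
    exact ⟨sW a, Set.mem_image_of_mem _ ha, sW b, Set.mem_image_of_mem _ hb, h1, h2, h3, h4⟩

lemma image_sW_sW (X : Set (ℝ × ℝ)) : sW '' (sW '' X) = X := by
  ext p
  rw [mem_sW, mem_sW, sW_sW]

lemma hatchX_eq_sW (T : Set (ℝ × ℝ)) : hatchX T = sW '' hatchY (sW '' T) := by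
  rw [hatchY_sW, image_sW_sW]

/-! ### path-connectedness of hatchings -/

lemma pc_hatchY {A : Set (ℝ × ℝ)} (h : IsPathConnected A) : IsPathConnected (hatchY A) := by
  obtain ⟨x₀, hx₀, hjoin⟩ := h
  refine ⟨x₀, subset_hatchY A hx₀, ?_⟩
  rintro p ⟨a, ha, b, hb, ha1, hb1, ha2, hb2⟩
  have j1 : JoinedIn (hatchY A) x₀ a := (hjoin ha).mono (subset_hatchY A)
  have j2 : JoinedIn (hatchY A) a p := by
    refine ⟨⟨⟨fun t => (p.1, a.2 + (t : ℝ) * (p.2 - a.2)), by fun_prop⟩, ?_, ?_⟩, ?_⟩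
    · show (p.1, a.2 + ((0 : unitInterval) : ℝ) * (p.2 - a.2)) = a
      rw [show ((0 : unitInterval) : ℝ) = 0 from rfl]
      rw [zero_mul, add_zero]
      exact Prod.ext ha1.symm rfl
    · show (p.1, a.2 + ((1 : unitInterval) : ℝ) * (p.2 - a.2)) = p
      rw [show ((1 : unitInterval) : ℝ) = 1 from rfl]
      rw [one_mul]
      exact Prod.ext rfl (by ring)
    · intro t
      show (p.1, a.2 + (t : ℝ) * (p.2 - a.2)) ∈ hatchY A
      refine ⟨a, ha, b, hb, ha1, hb1, ?_, ?_⟩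
      · show a.2 ≤ a.2 + (t : ℝ) * (p.2 - a.2)
        nlinarith [mul_nonneg t.2.1 (sub_nonneg.2 ha2)]
      · show a.2 + (t : ℝ) * (p.2 - a.2) ≤ b.2
        have h1 := t.2.2
        have h2 : ((t : ℝ)) * (p.2 - a.2) ≤ p.2 - a.2 := by
          nlinarith [sub_nonneg.2 ha2]
        linarith
  exact j1.trans j2

lemma pc_hatchX {A : Set (ℝ × ℝ)} (h : IsPathConnected A) : IsPathConnected (hatchX A) := by
  rw [hatchX_eq_sW]
  exact (pc_hatchY (h.image cont_sW)).image cont_sW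

/-! ### compactness of hatchings -/

lemma cp_hatchY {A : Set (ℝ × ℝ)} (h : IsCompact A) : IsCompact (hatchY A) := by
  have hK : IsCompact (((A ×ˢ A) ∩ {q : (ℝ × ℝ) × (ℝ × ℝ) | q.1.1 = q.2.1}) ×ˢ (Icc (0:ℝ) 1)) :=
    ((h.prod h).inter_right (isClosed_eq (by fun_prop) (by fun_prop))).prod isCompact_Icc
  have himg : hatchY A = (fun q : ((ℝ × ℝ) × (ℝ × ℝ)) × ℝ =>
      ((q.1.1.1 : ℝ), q.1.1.2 + q.2 * (q.1.2.2 - q.1.1.2))) ''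
      (((A ×ˢ A) ∩ {q : (ℝ × ℝ) × (ℝ × ℝ) | q.1.1 = q.2.1}) ×ˢ (Icc (0:ℝ) 1)) := by
    ext p
    constructor
    · rintro ⟨a, ha, b, hb, h1, h2, h3, h4⟩
      by_cases hd : b.2 = a.2
      · refine ⟨((a, b), 0), ⟨⟨⟨ha, hb⟩, h1.trans h2.symm⟩, by norm_num⟩, ?_⟩
        have hp2 : p.2 = a.2 := le_antisymm (hd ▸ h4) h3
        show (a.1, a.2 + 0 * (b.2 - a.2)) = p
        rw [zero_mul, add_zero]
        exact Prod.ext h1 hp2.symm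
      · have hlt : a.2 < b.2 := lt_of_le_of_ne (h3.trans h4) (fun e => hd e.symm)
        have hne : b.2 - a.2 ≠ 0 := by linarith
        refine ⟨((a, b), (p.2 - a.2) / (b.2 - a.2)), ⟨⟨⟨ha, hb⟩, h1.trans h2.symm⟩,
          ⟨div_nonneg (by linarith) (by linarith), (div_le_one (by linarith)).2 (by linarith)⟩⟩, ?_⟩
        show (a.1, a.2 + (p.2 - a.2) / (b.2 - a.2) * (b.2 - a.2)) = p
        rw [div_mul_cancel₀ _ hne]
        exact Prod.ext h1 (by ring)
    · rintro ⟨⟨⟨a, b⟩, t⟩, ⟨⟨⟨ha, hb⟩, hab⟩, ht0, ht1⟩, rfl⟩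
      have hab' : a.1 = b.1 := hab
      have ht0' : (0:ℝ) ≤ t := ht0
      have ht1' : (t:ℝ) ≤ 1 := ht1
      show (a.1, a.2 + t * (b.2 - a.2)) ∈ hatchY A
      rcases le_total a.2 b.2 with hcmp | hcmp
      · refine ⟨a, ha, b, hb, rfl, hab'.symm, ?_, ?_⟩
        · show a.2 ≤ a.2 + t * (b.2 - a.2)
          nlinarith [mul_nonneg ht0' (sub_nonneg.2 hcmp)]
        · show a.2 + t * (b.2 - a.2) ≤ b.2
          nlinarith [mul_nonneg (sub_nonneg.2 ht1') (sub_nonneg.2 hcmp)]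
      · refine ⟨b, hb, a, ha, hab'.symm, rfl, ?_, ?_⟩
        · show b.2 ≤ a.2 + t * (b.2 - a.2)
          nlinarith [mul_nonneg (sub_nonneg.2 ht1') (sub_nonneg.2 hcmp)]
        · show a.2 + t * (b.2 - a.2) ≤ a.2
          nlinarith [mul_nonneg ht0' (sub_nonneg.2 hcmp)]
  rw [himg]
  exact hK.image (by fun_prop)

lemma cp_hatchX {A : Set (ℝ × ℝ)} (h : IsCompact A) : IsCompact (hatchX A) := by
  rw [hatchX_eq_sW]
  exact ((cp_hatchY (h.image cont_sW)).image cont_sW)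

/-! ### crossing lemmas and commutation of hatchings -/

lemma cross_up {A : Set (ℝ × ℝ)} (hA : IsPathConnected A) {a b : ℝ × ℝ} (ha : a ∈ A)
    (hb : b ∈ A) {ξ η : ℝ} (hax : a.1 ≤ ξ) (hbx : ξ ≤ b.1) (hay : η ≤ a.2) (hby : η ≤ b.2) :
    ∃ q ∈ hatchX A, q.1 = ξ ∧ η ≤ q.2 := by
  obtain ⟨γ, hγ⟩ := hA.joinedIn a ha b hb
  set f : ℝ → ℝ × ℝ := ⇑γ.extend with hfdef
  have hf : Continuous f := γ.continuous_extend
  have hmem : ∀ s ∈ Icc (0:ℝ) 1, f s ∈ A := by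
    intro s hs; rw [hfdef, γ.extend_apply hs]; exact hγ _
  have hf0 : f 0 = a := γ.extend_zero
  have hf1 : f 1 = b := γ.extend_one
  by_cases hc : ∃ s ∈ Icc (0:ℝ) 1, (f s).1 = ξ ∧ η ≤ (f s).2
  · obtain ⟨s, hs, h1, h2⟩ := hc
    exact ⟨f s, subset_hatchX A (hmem s hs), h1, h2⟩
  · push_neg at hc
    set Ep := Icc (0:ℝ) 1 ∩ {s | ξ ≤ (f s).1} ∩ {s | η ≤ (f s).2} with hEp
    have hEpc : IsClosed Ep := (isClosed_Icc.inter (isClosed_le continuous_const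
      (continuous_fst.comp hf))).inter (isClosed_le continuous_const (continuous_snd.comp hf))
    have hEpne : Ep.Nonempty := by
      refine ⟨1, ⟨⟨by norm_num, ?_⟩, ?_⟩⟩
      · show ξ ≤ (f 1).1; rw [hf1]; exact hbx
      · show η ≤ (f 1).2; rw [hf1]; exact hby
    have hEpbdd : BddBelow Ep := ⟨0, fun s hs => hs.1.1.1⟩
    set tp := sInf Ep with htpdef
    have htpE : tp ∈ Ep := hEpc.csInf_mem hEpne hEpbdd
    have htpI : tp ∈ Icc (0:ℝ) 1 := htpE.1.1
    have htp2 : η ≤ (f tp).2 := htpE.2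
    have htpx : ξ < (f tp).1 :=
      lt_of_le_of_ne htpE.1.2 (fun e => absurd htp2 (not_le.2 (hc tp htpI e.symm)))
    set Em := Icc (0:ℝ) tp ∩ {s | (f s).1 ≤ ξ} ∩ {s | η ≤ (f s).2} with hEm
    have hEmc : IsClosed Em := (isClosed_Icc.inter (isClosed_le
      (continuous_fst.comp hf) continuous_const)).inter
      (isClosed_le continuous_const (continuous_snd.comp hf))
    have hEmne : Em.Nonempty := by
      refine ⟨0, ⟨⟨⟨le_rfl, htpI.1⟩, ?_⟩, ?_⟩⟩
      · show (f 0).1 ≤ ξ; rw [hf0]; exact hax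
      · show η ≤ (f 0).2; rw [hf0]; exact hay
    have hEmbdd : BddAbove Em := ⟨tp, fun s hs => hs.1.1.2⟩
    set tm := sSup Em with htmdef
    have htmE : tm ∈ Em := hEmc.csSup_mem hEmne hEmbdd
    have htmI : tm ∈ Icc (0:ℝ) tp := htmE.1.1
    have htm2 : η ≤ (f tm).2 := htmE.2
    have htmIcc : tm ∈ Icc (0:ℝ) 1 := ⟨htmI.1, htmI.2.trans htpI.2⟩
    have htmx : (f tm).1 < ξ :=
      lt_of_le_of_ne htmE.1.2 (fun e => absurd htm2 (not_le.2 (hc tm htmIcc e)))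
    have htmtp : tm < tp := by
      rcases eq_or_lt_of_le htmI.2 with e | e
      · exfalso; rw [e] at htmx; linarith
      · exact e
    have hmidlt : ∀ s, tm < s → s < tp → (f s).2 < η := by
      intro s hs1 hs2
      by_contra hge
      push_neg at hge
      have hsI : s ∈ Icc (0:ℝ) 1 := ⟨htmI.1.trans (le_of_lt hs1), (le_of_lt hs2).trans htpI.2⟩
      rcases le_or_gt (f s).1 ξ with h | h
      · have hsm : s ∈ Em := ⟨⟨⟨hsI.1, le_of_lt hs2⟩, h⟩, hge⟩
        exact absurd (le_csSup hEmbdd hsm) (not_le.2 hs1)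
      · have hsp : s ∈ Ep := ⟨⟨hsI, le_of_lt h⟩, hge⟩
        exact absurd (csInf_le hEpbdd hsp) (not_le.2 hs2)
    have htm_eq : (f tm).2 = η := by
      refine le_antisymm ?_ htm2
      have htend : Tendsto (fun s => (f s).2) (𝓝[>] tm) (𝓝 ((f tm).2)) :=
        (Continuous.tendsto (by fun_prop) tm).mono_left nhdsWithin_le_nhds
      refine le_of_tendsto htend ?_
      filter_upwards [nhdsWithin_le_nhds (Iio_mem_nhds htmtp), self_mem_nhdsWithin] with s h1 h2
      exact le_of_lt (hmidlt s h2 h1)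
    have htp_eq : (f tp).2 = η := by
      refine le_antisymm ?_ htp2
      have htend : Tendsto (fun s => (f s).2) (𝓝[<] tp) (𝓝 ((f tp).2)) :=
        (Continuous.tendsto (by fun_prop) tp).mono_left nhdsWithin_le_nhds
      refine le_of_tendsto htend ?_
      filter_upwards [nhdsWithin_le_nhds (Ioi_mem_nhds htmtp), self_mem_nhdsWithin] with s h1 h2
      exact le_of_lt (hmidlt s h1 h2)
    exact ⟨(ξ, η), ⟨f tm, hmem tm htmIcc, f tp, hmem tp htpI, htm_eq, htp_eq,
      le_of_lt htmx, le_of_lt htpx⟩, rfl, le_rfl⟩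

lemma cross_dn {A : Set (ℝ × ℝ)} (hA : IsPathConnected A) {a b : ℝ × ℝ} (ha : a ∈ A)
    (hb : b ∈ A) {ξ η : ℝ} (hax : a.1 ≤ ξ) (hbx : ξ ≤ b.1) (hay : a.2 ≤ η) (hby : b.2 ≤ η) :
    ∃ q ∈ hatchX A, q.1 = ξ ∧ q.2 ≤ η := by
  obtain ⟨q', hq', h1, h2⟩ := cross_up (hA.image cont_nY) (Set.mem_image_of_mem nY ha)
    (Set.mem_image_of_mem nY hb) (ξ := ξ) (η := -η)
    (show (nY a).1 ≤ ξ from hax) (show ξ ≤ (nY b).1 from hbx)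
    (show -η ≤ (nY a).2 by show -η ≤ -a.2; linarith)
    (show -η ≤ (nY b).2 by show -η ≤ -b.2; linarith)
  rw [hatchX_nY, mem_nY] at hq'
  refine ⟨nY q', hq', h1, ?_⟩
  show -q'.2 ≤ η
  have : -η ≤ q'.2 := h2
  linarith

lemma dh_subset {A : Set (ℝ × ℝ)} (hA : IsPathConnected A) :
    hatchX (hatchY A) ⊆ hatchY (hatchX A) := by
  rintro p ⟨u, ⟨um, hum, up, hup, hum1, hup1, hum2, hup2⟩,
    v, ⟨vm, hvm, vp, hvp, hvm1, hvp1, hvm2, hvp2⟩, hu2, hv2, hu1, hv1⟩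
  obtain ⟨qU, hqU, hqU1, hqU2⟩ := cross_up hA hup hvp
    (show up.1 ≤ p.1 by rw [hup1]; exact hu1)
    (show p.1 ≤ vp.1 by rw [hvp1]; exact hv1)
    (show p.2 ≤ up.2 by rw [← hu2]; exact hup2)
    (show p.2 ≤ vp.2 by rw [← hv2]; exact hvp2)
  obtain ⟨qD, hqD, hqD1, hqD2⟩ := cross_dn hA hum hvm
    (show um.1 ≤ p.1 by rw [hum1]; exact hu1)
    (show p.1 ≤ vm.1 by rw [hvm1]; exact hv1)
    (show um.2 ≤ p.2 by rw [← hu2]; exact hum2)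
    (show vm.2 ≤ p.2 by rw [← hv2]; exact hvm2)
  exact ⟨qD, hqD, qU, hqU, hqD1, hqU1, hqD2, hqU2⟩

lemma sW_injective : Function.Injective sW :=
  Function.LeftInverse.injective sW_sW

lemma dh_comm {A : Set (ℝ × ℝ)} (hA : IsPathConnected A) :
    doubleHatch A = hatchY (hatchX A) := by
  refine Subset.antisymm (dh_subset hA) ?_
  have h' := dh_subset (hA.image cont_sW)
  rw [hatchY_sW A, hatchX_sW A, hatchX_sW (hatchX A), hatchY_sW (hatchY A)] at h'
  show hatchY (hatchX A) ⊆ hatchX (hatchY A)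
  exact (Set.image_subset_image_iff sW_injective).1 h'

/-! ### the four-witness combinatorial lemma -/

lemma four_witness {I : Type} {x : I → ℝ × ℝ} {y : ℝ × ℝ} {act : Finset I}
    (h1 : ∃ i ∈ act, (x i).1 ≤ y.1) (h2 : ∃ i ∈ act, y.1 ≤ (x i).1)
    (h3 : ∃ i ∈ act, (x i).2 ≤ y.2) (h4 : ∃ i ∈ act, y.2 ≤ (x i).2) :
    ∃ i ∈ act, ∃ j ∈ act, Btw (x i) y (x j) := by
  obtain ⟨a1, ha1m, ha1⟩ := h1
  obtain ⟨b1, hb1m, hb1⟩ := h2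
  obtain ⟨a2, ha2m, ha2⟩ := h3
  obtain ⟨b2, hb2m, hb2⟩ := h4
  rcases le_total (x a1).2 y.2 with p1 | p1 <;> rcases le_total y.2 (x b1).2 with p2 | p2
  · exact ⟨a1, ha1m, b1, hb1m, Set.mem_uIcc.2 (Or.inl ⟨ha1, hb1⟩),
      Set.mem_uIcc.2 (Or.inl ⟨p1, p2⟩)⟩
  · rcases le_total y.1 (x b2).1 with q | q
    · exact ⟨a1, ha1m, b2, hb2m, Set.mem_uIcc.2 (Or.inl ⟨ha1, q⟩),
        Set.mem_uIcc.2 (Or.inl ⟨p1, hb2⟩)⟩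
    · exact ⟨b2, hb2m, b1, hb1m, Set.mem_uIcc.2 (Or.inl ⟨q, hb1⟩),
        Set.mem_uIcc.2 (Or.inr ⟨p2, hb2⟩)⟩
  · rcases le_total y.1 (x a2).1 with q | q
    · exact ⟨a1, ha1m, a2, ha2m, Set.mem_uIcc.2 (Or.inl ⟨ha1, q⟩),
        Set.mem_uIcc.2 (Or.inr ⟨ha2, p1⟩)⟩
    · exact ⟨a2, ha2m, b1, hb1m, Set.mem_uIcc.2 (Or.inl ⟨q, hb1⟩),
        Set.mem_uIcc.2 (Or.inl ⟨ha2, p2⟩)⟩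
  · exact ⟨a1, ha1m, b1, hb1m, Set.mem_uIcc.2 (Or.inl ⟨ha1, hb1⟩),
      Set.mem_uIcc.2 (Or.inr ⟨p2, p1⟩)⟩

/-! ### the iterated-median construction -/

lemma exists_z {T : Set (ℝ × ℝ)} (hN : Nice T) {I : Type} {x : I → ℝ × ℝ} {y : ℝ × ℝ}
    (hy : y ∈ T) :
    ∀ act : Finset I, act.Nonempty → (∀ i ∈ act, x i ∈ T) →
    ∃ z ∈ T, (∀ i ∈ act, Btw y z (x i)) ∧
      (z.1 = y.1 → (∃ i ∈ act, (x i).1 ≤ y.1) ∧ (∃ i ∈ act, y.1 ≤ (x i).1)) ∧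
      (z.2 = y.2 → (∃ i ∈ act, (x i).2 ≤ y.2) ∧ (∃ i ∈ act, y.2 ≤ (x i).2)) := by
  intro act
  induction act using Finset.cons_induction with
  | empty => intro h; exact absurd rfl h.ne_empty
  | cons i s hi ih =>
    intro _ hxT
    have hmemi : i ∈ Finset.cons i s hi := Finset.mem_cons_self i s
    have hxiT : x i ∈ T := hxT i hmemi
    rcases s.eq_empty_or_nonempty with rfl | hs
    · refine ⟨x i, hxiT, ?_, ?_, ?_⟩
      · intro j hj
        have hji : j = i := by simpa using hj
        subst hji
        exact ⟨Set.right_mem_uIcc, Set.right_mem_uIcc⟩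
      · intro he
        exact ⟨⟨i, hmemi, le_of_eq he⟩, ⟨i, hmemi, le_of_eq he.symm⟩⟩
      · intro he
        exact ⟨⟨i, hmemi, le_of_eq he⟩, ⟨i, hmemi, le_of_eq he.symm⟩⟩
    · obtain ⟨z', hz'T, hbtw', hc1', hc2'⟩ := ih hs (fun j hj => hxT j (Finset.mem_cons_of_mem hj))
      refine ⟨clampB y z' (x i), clamp_mem hN hy hz'T hxiT, ?_, ?_, ?_⟩
      · intro j hj
        rcases Finset.mem_cons.1 hj with rfl | hjs
        · exact ⟨mid_mem_uIcc_left y.1 z'.1 (x j).1, mid_mem_uIcc_left y.2 z'.2 (x j).2⟩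
        · have hzz : Btw y (clampB y z' (x i)) z' :=
            ⟨mid_mem_uIcc y.1 z'.1 (x i).1, mid_mem_uIcc y.2 z'.2 (x i).2⟩
          exact hzz.trans (hbtw' j hjs)
      · intro he
        by_cases hz1 : z'.1 = y.1
        · obtain ⟨⟨a, ham, ha⟩, ⟨b, hbm, hb⟩⟩ := hc1' hz1
          exact ⟨⟨a, Finset.mem_cons_of_mem ham, ha⟩, ⟨b, Finset.mem_cons_of_mem hbm, hb⟩⟩
        · have hbet : y.1 ∈ uIcc z'.1 (x i).1 := mid_collapse he
          obtain ⟨j, hjs⟩ := hs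
          have hz'j : z'.1 ∈ uIcc y.1 (x j).1 := (hbtw' j hjs).1
          rcases lt_or_gt_of_ne hz1 with hlt | hgt
          · have hj1 : (x j).1 ≤ y.1 := by
              rcases Set.mem_uIcc.1 hz'j with ⟨u1, u2⟩ | ⟨u1, u2⟩ <;> linarith
            have hi1 : y.1 ≤ (x i).1 := by
              rcases Set.mem_uIcc.1 hbet with ⟨u1, u2⟩ | ⟨u1, u2⟩ <;> linarith
            exact ⟨⟨j, Finset.mem_cons_of_mem hjs, hj1⟩, ⟨i, hmemi, hi1⟩⟩
          · have hj1 : y.1 ≤ (x j).1 := by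
              rcases Set.mem_uIcc.1 hz'j with ⟨u1, u2⟩ | ⟨u1, u2⟩ <;> linarith
            have hi1 : (x i).1 ≤ y.1 := by
              rcases Set.mem_uIcc.1 hbet with ⟨u1, u2⟩ | ⟨u1, u2⟩ <;> linarith
            exact ⟨⟨i, hmemi, hi1⟩, ⟨j, Finset.mem_cons_of_mem hjs, hj1⟩⟩
      · intro he
        by_cases hz2 : z'.2 = y.2
        · obtain ⟨⟨a, ham, ha⟩, ⟨b, hbm, hb⟩⟩ := hc2' hz2
          exact ⟨⟨a, Finset.mem_cons_of_mem ham, ha⟩, ⟨b, Finset.mem_cons_of_mem hbm, hb⟩⟩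
        · have hbet : y.2 ∈ uIcc z'.2 (x i).2 := mid_collapse he
          obtain ⟨j, hjs⟩ := hs
          have hz'j : z'.2 ∈ uIcc y.2 (x j).2 := (hbtw' j hjs).2
          rcases lt_or_gt_of_ne hz2 with hlt | hgt
          · have hj1 : (x j).2 ≤ y.2 := by
              rcases Set.mem_uIcc.1 hz'j with ⟨u1, u2⟩ | ⟨u1, u2⟩ <;> linarith
            have hi1 : y.2 ≤ (x i).2 := by
              rcases Set.mem_uIcc.1 hbet with ⟨u1, u2⟩ | ⟨u1, u2⟩ <;> linarith
            exact ⟨⟨j, Finset.mem_cons_of_mem hjs, hj1⟩, ⟨i, hmemi, hi1⟩⟩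
          · have hj1 : y.2 ≤ (x j).2 := by
              rcases Set.mem_uIcc.1 hz'j with ⟨u1, u2⟩ | ⟨u1, u2⟩ <;> linarith
            have hi1 : (x i).2 ≤ y.2 := by
              rcases Set.mem_uIcc.1 hbet with ⟨u1, u2⟩ | ⟨u1, u2⟩ <;> linarith
            exact ⟨⟨i, hmemi, hi1⟩, ⟨j, Finset.mem_cons_of_mem hjs, hj1⟩⟩


theorem doubleHatch_hyperconvex_of_compact (A : Set (ℝ × ℝ)) (hcomp : IsCompact A)
    (hA : IsPathConnected A) : TaxiHyperconvexOn (doubleHatch A) := by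
  classical
  intro I x r hxS hr hpair
  have hSpc : IsPathConnected (doubleHatch A) := pc_hatchX (pc_hatchY hA)
  have hScp : IsCompact (doubleHatch A) := cp_hatchX (cp_hatchY hcomp)
  have hHC : HC (doubleHatch A) := hc_hatchX _
  have hVC : VC (doubleHatch A) := by
    rw [dh_comm hA]; exact vc_hatchY _
  have hNice : Nice (doubleHatch A) := ⟨hSpc, hHC, hVC⟩
  have hSne : (doubleHatch A).Nonempty := by
    obtain ⟨p, hp, -⟩ := hSpc
    exact ⟨p, hp⟩
  have hFcont : ∀ (s : Finset I) (hs : s.Nonempty),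
      Continuous fun p : ℝ × ℝ => s.sup' hs fun i => taxiDist (x i) p - r i := by
    intro s hs
    induction hs using Finset.Nonempty.cons_induction with
    | singleton i =>
      simp only [Finset.sup'_singleton]
      exact (taxi_cont (x i)).sub continuous_const
    | cons i s hi hs ih =>
      show Continuous fun p : ℝ × ℝ =>
        (Finset.cons i s hi).sup' (Finset.cons_nonempty hi) fun j => taxiDist (x j) p - r j
      have heq : ∀ p : ℝ × ℝ, ((Finset.cons i s hi).sup' (Finset.cons_nonempty hi)
          fun j => taxiDist (x j) p - r j)
          = max (taxiDist (x i) p - r i) (s.sup' hs fun j => taxiDist (x j) p - r j) := by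
        intro p
        rw [Finset.sup'_cons hs]
      simp only [heq]
      exact ((taxi_cont (x i)).sub continuous_const).max ih
  have key : ∀ t : Finset I, ∃ p ∈ doubleHatch A, ∀ i ∈ t, taxiDist (x i) p ≤ r i := by
    intro t
    rcases t.eq_empty_or_nonempty with rfl | ht
    · obtain ⟨p, hp⟩ := hSne
      exact ⟨p, hp, by simp⟩
    · by_contra hno
      push_neg at hno
      obtain ⟨y, hyS, hymin⟩ := hScp.exists_isMinOn hSne ((hFcont t ht)).continuousOn
      set ε := t.sup' ht (fun i => taxiDist (x i) y - r i) with hε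
      have hεpos : 0 < ε := by
        obtain ⟨i, hit, hri⟩ := hno y hyS
        have hle : taxiDist (x i) y - r i ≤ ε := by
          rw [hε]; exact Finset.le_sup' (fun j => taxiDist (x j) y - r j) hit
        linarith
      set act := t.filter (fun i => r i + ε ≤ taxiDist (x i) y) with hact
      have hactne : act.Nonempty := by
        obtain ⟨i, hit, hieq⟩ := Finset.exists_mem_eq_sup' ht (fun i => taxiDist (x i) y - r i)
        refine ⟨i, Finset.mem_filter.2 ⟨hit, ?_⟩⟩
        rw [hε, hieq]
        linarith
      have hact_le : ∀ i ∈ t, taxiDist (x i) y - r i ≤ ε := by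
        intro i hit
        rw [hε]; exact Finset.le_sup' (fun j => taxiDist (x j) y - r j) hit
      obtain ⟨z, hzS, hbtw, hc1, hc2⟩ := exists_z hNice hyS act hactne (fun i _ => hxS i)
      by_cases hzy : z = y
      · have h1 := hc1 (by rw [hzy])
        have h2 := hc2 (by rw [hzy])
        obtain ⟨i, hia, j, hja, hbtwij⟩ := four_witness h1.1 h1.2 h2.1 h2.2
        have hd := hbtwij.dist_eq
        have hi := (Finset.mem_filter.1 hia).2
        have hj := (Finset.mem_filter.1 hja).2
        have hji : taxiDist y (x j) = taxiDist (x j) y := taxi_comm _ _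
        have hp := hpair i j
        linarith
      · set g : I → ℝ := fun i =>
          if r i + ε ≤ taxiDist (x i) y then 1 else ε - (taxiDist (x i) y - r i) with hg
        set η := t.inf' ht g with hη
        have hηpos : 0 < η := by
          rw [hη, Finset.lt_inf'_iff]
          intro i hit
          rw [hg]
          dsimp only
          split_ifs with hcond
          · norm_num
          · push_neg at hcond; linarith
        set W := (fun p => clampB y z p) '' (doubleHatch A) with hW
        have hWpc : IsPathConnected W := hSpc.image (by unfold clampB mid; fun_prop)
        have hWS : W ⊆ doubleHatch A := by
          rintro _ ⟨q, hq, rfl⟩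
          exact clamp_mem hNice hyS hzS hq
        have hclampy : clampB y z y = y := by
          unfold clampB
          rw [mid_of_mem (min_le_left y.1 z.1) (le_max_left y.1 z.1),
              mid_of_mem (min_le_left y.2 z.2) (le_max_left y.2 z.2)]
        have hclampz : clampB y z z = z := by
          unfold clampB
          rw [mid_of_mem (min_le_right y.1 z.1) (le_max_right y.1 z.1),
              mid_of_mem (min_le_right y.2 z.2) (le_max_right y.2 z.2)]
        have hyW : y ∈ W := ⟨y, hyS, hclampy⟩
        have hzW : z ∈ W := ⟨z, hzS, hclampz⟩
        have hdyz : 0 < dist y z := dist_pos.2 (fun e => hzy e.symm)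
        set η' := min (η / 4) (dist y z / 2) with hη'
        have hη'pos : 0 < η' := lt_min (by linarith) (by linarith)
        have hpoint : ∃ p ∈ W, p ≠ y ∧ dist y p < η' := by
          by_contra hcon
          push_neg at hcon
          have hpre := hWpc.isConnected.isPreconnected
          have hcover : W ⊆ Metric.ball y η' ∪ (Metric.closedBall y (η' / 2))ᶜ := by
            intro q hq
            rcases lt_or_ge (dist y q) η' with h | h
            · exact Or.inl (by rwa [Metric.mem_ball, dist_comm])
            · refine Or.inr ?_
              rw [Set.mem_compl_iff, Metric.mem_closedBall, not_le, dist_comm]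
              linarith
          have hU : (W ∩ Metric.ball y η').Nonempty := ⟨y, hyW, Metric.mem_ball_self hη'pos⟩
          have hV : (W ∩ (Metric.closedBall y (η' / 2))ᶜ).Nonempty := by
            refine ⟨z, hzW, ?_⟩
            rw [Set.mem_compl_iff, Metric.mem_closedBall, not_le, dist_comm]
            have hm : η' ≤ dist y z / 2 := min_le_right _ _
            linarith
          obtain ⟨q, hqW, hqU, hqV⟩ := hpre _ _ Metric.isOpen_ball
            Metric.isClosed_closedBall.isOpen_compl hcover hU hV
          have hqy : q = y := by
            by_contra hne
            have hd := hcon q hqW hne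
            rw [Metric.mem_ball, dist_comm] at hqU
            linarith
          rw [hqy] at hqV
          apply hqV
          rw [Metric.mem_closedBall, dist_self]
          linarith
        obtain ⟨p, hpW, hpne, hpdist⟩ := hpoint
        have hpS : p ∈ doubleHatch A := hWS hpW
        have hptaxi : taxiDist y p < η / 2 := by
          have h2d := taxi_le_two_dist y p
          have hm : η' ≤ η / 4 := min_le_left _ _
          have hd : dist y p < η / 4 := lt_of_lt_of_le hpdist hm
          linarith
        have hbtwyp : Btw y p z := by
          obtain ⟨q, hq, he⟩ := hpW
          rw [← he]
          exact ⟨mid_mem_uIcc y.1 z.1 q.1, mid_mem_uIcc y.2 z.2 q.2⟩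
        have hlt : ∀ i ∈ t, taxiDist (x i) p - r i < ε := by
          intro i hit
          by_cases hcond : r i + ε ≤ taxiDist (x i) y
          · have hia : i ∈ act := Finset.mem_filter.2 ⟨hit, hcond⟩
            have hbtwi : Btw y p (x i) := hbtwyp.trans (hbtw i hia)
            have hd := hbtwi.dist_eq
            have hppos : 0 < taxiDist y p := taxi_pos (fun e => hpne e.symm)
            have hcomm1 : taxiDist p (x i) = taxiDist (x i) p := taxi_comm _ _
            have hcomm2 : taxiDist y (x i) = taxiDist (x i) y := taxi_comm _ _
            have hle := hact_le i hit
            linarith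
          · push_neg at hcond
            have hgi : η ≤ g i := by
              rw [hη]
              exact Finset.inf'_le g hit
            have hgieq : g i = ε - (taxiDist (x i) y - r i) := by
              rw [hg]
              dsimp only
              rw [if_neg (not_le.2 hcond)]
            have hgi' : η ≤ ε - (taxiDist (x i) y - r i) := hgieq ▸ hgi
            have htri := taxi_triangle (x i) y p
            linarith
        have hFp := (Finset.sup'_lt_iff ht).2 hlt
        have hmin' := isMinOn_iff.1 hymin p hpS
        rw [← hε] at hmin'
        linarith
  by_contra hcon
  push_neg at hcon
  have hempty : doubleHatch A ∩ ⋂ i, {p : ℝ × ℝ | taxiDist (x i) p ≤ r i} = ∅ := by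
    rw [Set.eq_empty_iff_forall_notMem]
    rintro p ⟨hpS, hpI⟩
    obtain ⟨i, hi⟩ := hcon p hpS
    exact absurd (Set.mem_iInter.1 hpI i) (not_le.2 hi)
  obtain ⟨t, htempty⟩ := hScp.elim_finite_subfamily_closed _
    (fun i => isClosed_le (taxi_cont (x i)) continuous_const) hempty
  obtain ⟨p, hpS, hp⟩ := key t
  rw [Set.eq_empty_iff_forall_notMem] at htempty
  exact htempty p ⟨hpS, Set.mem_iInter₂.2 fun i hi => hp i hi⟩

end TDHmain
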